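/- Let K be a field and f0 = s u^2, f1 = t^2(s+u), f2 = s t (s+u), f3 = t u (s+u) in K[s,t,u]. Then the polynomial P(x,y,z,w) = xyz + xyw - zw^2 vanishes identically under the substitution x = f0, y = f1, z = f2, w = f3, and P is irreducible in K[x,y,z,w]. -/

import Mathlib

open MvPolynomial

open Polynomial in
lemma irreducible_linear' {R : Type*} [CommRing R] [IsDomain R] {A B : R} (hA : A ≠ 0)
    (h : ∀ c : R, c ∣ A → c ∣ B → IsUnit c) :
    Irreducible (Polynomial.C A * Polynomial.X + Polynomial.C B) := by
  set q := Polynomial.C A * Polynomial.X + Polynomial.C B with hq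
  have hdeg : q.natDegree = 1 := natDegree_linear hA
  have hc1 : q.coeff 1 = A := by simp [hq]
  have hc0 : q.coeff 0 = B := by simp [hq]
  constructor
  · intro hu
    have := Polynomial.natDegree_eq_zero_of_isUnit hu
    omega
  · intro f g hfg
    have hfne : f ≠ 0 := by rintro rfl; rw [zero_mul] at hfg; exact hA (by rw [← hc1, hfg]; simp)
    have hgne : g ≠ 0 := by rintro rfl; rw [mul_zero] at hfg; exact hA (by rw [← hc1, hfg]; simp)
    have hadd : f.natDegree + g.natDegree = 1 := by
      rw [← Polynomial.natDegree_mul hfne hgne, ← hfg, hdeg]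
    rcases Nat.add_eq_one_iff.mp hadd with ⟨hf0, hg1⟩ | ⟨hf1, hg0⟩
    · left
      have hfc : f = Polynomial.C (f.coeff 0) := eq_C_of_natDegree_eq_zero hf0
      rw [hfc, Polynomial.isUnit_C]
      refine h _ ⟨g.coeff 1, ?_⟩ ⟨g.coeff 0, ?_⟩
      · rw [← hc1, hfg, hfc, Polynomial.coeff_C_mul]; simp
      · rw [← hc0, hfg, hfc, Polynomial.coeff_C_mul]; simp
    · right
      have hgc : g = Polynomial.C (g.coeff 0) := eq_C_of_natDegree_eq_zero hg0
      rw [hgc, Polynomial.isUnit_C]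
      refine h _ ⟨f.coeff 1, ?_⟩ ⟨f.coeff 0, ?_⟩
      · rw [← hc1, hfg, hgc, Polynomial.coeff_mul_C, mul_comm]; simp
      · rw [← hc0, hfg, hgc, Polynomial.coeff_mul_C, mul_comm]; simp

lemma primeX3 {K : Type*} [Field K] (i : Fin 3) : Prime (MvPolynomial.X i : MvPolynomial (Fin 3) K) := by
  let e : MvPolynomial (Fin 3) K ≃ₐ[K] Polynomial (MvPolynomial (Fin 2) K) :=
    (renameEquiv K (Equiv.swap i 0)).trans (finSuccEquiv K 2)
  have he : e (MvPolynomial.X i) = Polynomial.X := by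
    simp [e, renameEquiv_apply, rename_X, Equiv.swap_apply_left, finSuccEquiv_X_zero]
  rw [← MulEquiv.prime_iff (p := MvPolynomial.X i) e.toMulEquiv]
  show Prime (e (MvPolynomial.X i))
  rw [he]
  exact Polynomial.prime_X

lemma coprimeAB {K : Type*} [Field K] :
    ∀ c : MvPolynomial (Fin 3) K,
      c ∣ (MvPolynomial.X 0 * MvPolynomial.X 1 - MvPolynomial.X 2 ^ 2) →
      c ∣ (MvPolynomial.X 0 * MvPolynomial.X 1 * MvPolynomial.X 2) → IsUnit c := by
  intro c hcA hcB
  by_contra hc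
  set A : MvPolynomial (Fin 3) K := MvPolynomial.X 0 * MvPolynomial.X 1 - MvPolynomial.X 2 ^ 2 with hA
  have hAne : A ≠ 0 := by
    intro h
    have := congrArg (MvPolynomial.aeval ![(1:K), 1, 0]) h
    simp [hA] at this
  have hcne : c ≠ 0 := by rintro rfl; exact hAne (zero_dvd_iff.mp hcA)
  obtain ⟨p, hp, hpc⟩ := WfDvdMonoid.exists_irreducible_factor hc hcne
  have hpprime : Prime p := (UniqueFactorizationMonoid.irreducible_iff_prime).mp hp
  have hpB : p ∣ MvPolynomial.X 0 * MvPolynomial.X 1 * MvPolynomial.X 2 := hpc.trans hcB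
  have key : ∀ i : Fin 3, p ∣ MvPolynomial.X i → (MvPolynomial.X i : MvPolynomial (Fin 3) K) ∣ A := by
    intro i hpi
    exact ((hp.associated_of_dvd ((primeX3 i).irreducible) hpi).symm.dvd).trans (hpc.trans hcA)
  rcases (hpprime.dvd_mul.mp hpB) with h | h
  · rcases hpprime.dvd_mul.mp h with h0 | h1
    · obtain ⟨m, hm⟩ := key 0 h0
      have := congrArg (MvPolynomial.aeval ![(0 : MvPolynomial (Fin 3) K), MvPolynomial.X 1, MvPolynomial.X 2]) hm
      simp [hA, sub_eq_zero] at this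
    · obtain ⟨m, hm⟩ := key 1 h1
      have := congrArg (MvPolynomial.aeval ![(MvPolynomial.X 0 : MvPolynomial (Fin 3) K), 0, MvPolynomial.X 2]) hm
      simp [hA, sub_eq_zero] at this
  · obtain ⟨m, hm⟩ := key 2 h
    have := congrArg (MvPolynomial.aeval ![(MvPolynomial.X 0 : MvPolynomial (Fin 3) K), MvPolynomial.X 1, 0]) hm
    simp [hA] at this

/-- For `f0 = s u^2`, `f1 = t^2 (s+u)`, `f2 = s t (s+u)`, `f3 = t u (s+u)` in
`K[s,t,u]`, the polynomial `P = xyz + xyw - z w^2` vanishes identically under the substitution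
`x = f0, y = f1, z = f2, w = f3`, and `P` is irreducible in `K[x,y,z,w]`. -/
theorem stmt_10 (K : Type*) [Field K]
    (f0 f1 f2 f3 : MvPolynomial (Fin 3) K)
    (hf0 : f0 = X 0 * X 2 ^ 2) (hf1 : f1 = X 1 ^ 2 * (X 0 + X 2))
    (hf2 : f2 = X 0 * X 1 * (X 0 + X 2)) (hf3 : f3 = X 1 * X 2 * (X 0 + X 2))
    (P : MvPolynomial (Fin 4) K)
    (hP : P = X 0 * X 1 * X 2 + X 0 * X 1 * X 3 - X 2 * X 3 ^ 2) :
    (aeval ![f0, f1, f2, f3]) P = 0 ∧ Irreducible P := by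
  constructor
  · subst hP hf0 hf1 hf2 hf3
    simp only [map_sub, map_add, map_mul, map_pow, MvPolynomial.aeval_X]
    simp only [Matrix.cons_val_zero, Matrix.cons_val_one, Matrix.head_cons,
      Matrix.cons_val_two, Matrix.tail_cons, Matrix.cons_val_three]
    ring
  · let e : MvPolynomial (Fin 4) K ≃ₐ[K] Polynomial (MvPolynomial (Fin 3) K) :=
      (renameEquiv K (Equiv.swap 2 0)).trans (finSuccEquiv K 3)
    have key : e P = Polynomial.C (MvPolynomial.X 0 * MvPolynomial.X 1 - MvPolynomial.X 2 ^ 2)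
        * Polynomial.X + Polynomial.C (MvPolynomial.X 0 * MvPolynomial.X 1 * MvPolynomial.X 2) := by
      have h0 : Equiv.swap (2 : Fin 4) 0 2 = 0 := Equiv.swap_apply_left 2 0
      have h2 : Equiv.swap (2 : Fin 4) 0 0 = 2 := Equiv.swap_apply_right 2 0
      have h1 : Equiv.swap (2 : Fin 4) 0 1 = 1 := Equiv.swap_apply_of_ne_of_ne (by decide) (by decide)
      have h3 : Equiv.swap (2 : Fin 4) 0 3 = 3 := Equiv.swap_apply_of_ne_of_ne (by decide) (by decide)
      have ee : ∀ i : Fin 4, e (X i) = finSuccEquiv K 3 (X (Equiv.swap 2 0 i)) := by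
        intro i
        rw [AlgEquiv.trans_apply, renameEquiv_apply, rename_X]
      have e0 : e (X 0) = Polynomial.C (MvPolynomial.X 1) := by
        rw [ee, h2, show ((2 : Fin 4)) = Fin.succ 1 from rfl, finSuccEquiv_X_succ]
      have e1 : e (X 1) = Polynomial.C (MvPolynomial.X 0) := by
        rw [ee, h1, show ((1 : Fin 4)) = Fin.succ 0 from rfl, finSuccEquiv_X_succ]
      have e2 : e (X 2) = Polynomial.X := by
        rw [ee, h0, finSuccEquiv_X_zero]
      have e3 : e (X 3) = Polynomial.C (MvPolynomial.X 2) := by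
        rw [ee, h3, show ((3 : Fin 4)) = Fin.succ 2 from rfl, finSuccEquiv_X_succ]
      rw [hP]
      simp only [map_sub, map_add, map_mul, map_pow, e0, e1, e2, e3]
      ring
    have hirr : Irreducible (e P) := by
      rw [key]
      refine irreducible_linear' ?_ coprimeAB
      intro h
      have := congrArg (MvPolynomial.aeval ![(1:K), 1, 0]) h
      simp at this
    exact (MulEquiv.irreducible_iff e.toMulEquiv).mp hirr
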